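/- Let A be a DG algebra and z a killable cycle of even degree d ≥ 0 whose class w = [z] ∈ H(A) is regular, i.e. the left annihilator of w in H(A) is zero. Then the inclusion A → A⟨y | ∂y = z⟩ induces an isomorphism H(A)/wH(A) ≅ H(A⟨y⟩). -/

import Mathlib

/-- Let A be a DG algebra and z a killable cycle of even degree dz ≥ 0 whose
homology class w = [z] is regular in H(A), i.e. the left annihilator of w in H(A) is zero.
Then the inclusion A → A⟨y | ∂y = z⟩ induces an isomorphism H(A)/wH(A) ≅ H(A⟨y⟩).
This canonical isomorphism is expressed by: (a) every cycle of A⟨y⟩ is, modulo boundaries,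
the image of a cycle of A (surjectivity of H(A) → H(A⟨y⟩)); and (b) a cycle of A becomes
a boundary in A⟨y⟩ exactly when its class lies in w·H(A) (the kernel of H(A) → H(A⟨y⟩)
is wH(A)). -/
theorem homology_of_exterior_extension
    {k A E : Type} [Field k] [Ring A] [Algebra k A] [Ring E] [Algebra k E]
    -- A is a DG k-algebra:
    (𝒜 : ℕ → Submodule k A) (d : A →ₗ[k] A)
    (hsupA : (⨆ m : ℕ, 𝒜 m) = ⊤)
    (honeA : (1 : A) ∈ 𝒜 0)
    (hmulA : ∀ (m l : ℕ) (a b : A), a ∈ 𝒜 m → b ∈ 𝒜 l → a * b ∈ 𝒜 (m + l))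
    (hd0 : ∀ a ∈ 𝒜 0, d a = 0)
    (hdgr : ∀ m : ℕ, ∀ a ∈ 𝒜 (m + 1), d a ∈ 𝒜 m)
    (hdd : ∀ a : A, d (d a) = 0)
    (hleib : ∀ (m : ℕ) (a b : A), a ∈ 𝒜 m →
      d (a * b) = d a * b + ((-1 : ℤ) ^ m) • (a * d b))
    -- z is a killable cycle of even degree dz with normalizing chain automorphism σ:
    (dz : ℕ) (hdz : Even dz) (z : A) (hz : z ∈ 𝒜 dz) (hzcycle : d z = 0)
    (σ : A ≃ₐ[k] A)
    (hσgr : ∀ m : ℕ, ∀ a ∈ 𝒜 m, σ a ∈ 𝒜 m)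
    (hσz : σ z = z)
    (hσchain : ∀ a : A, σ (d a) = d (σ a))
    (hnormal : ∀ (m : ℕ), ∀ a ∈ 𝒜 m, z * a = ((-1 : ℤ) ^ (m * dz)) • (σ a * z))
    -- w = [z] is regular: the left annihilator of w in H(A) is zero
    (hreg : ∀ a : A, d a = 0 → (∃ b : A, a * z = d b) → ∃ c : A, a = d c)
    -- E = A⟨y | ∂y = z⟩ :
    (ι : A →ₐ[k] E) (hι : Function.Injective ι) (y : E)
    (hfree : ∀ e : E, ∃! p : A × A, e = ι p.1 + ι p.2 * y)
    (hysq : y * y = 0)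
    (hycomm : ∀ (m : ℕ), ∀ a ∈ 𝒜 m, y * ι a = ((-1 : ℤ) ^ m) • (ι (σ a) * y))
    (D : E →ₗ[k] E)
    (hD : ∀ (m : ℕ) (a₁ a₂ : A), a₂ ∈ 𝒜 m →
      D (ι a₁ + ι a₂ * y) = ι (d a₁) + ι (d a₂) * y + ((-1 : ℤ) ^ m) • (ι a₂ * ι z)) :
    -- (a) H(A) → H(E) is surjective:
    (∀ e : E, D e = 0 → ∃ a : A, d a = 0 ∧ ∃ e' : E, e - ι a = D e') ∧
    -- (b) the kernel of H(A) → H(E) is w·H(A):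
    (∀ a : A, d a = 0 →
      ((∃ e' : E, ι a = D e') ↔ (∃ b : A, d b = 0 ∧ ∃ a' : A, a - z * b = d a'))) := by
  classical
  -- the sign-twist correspondence
  set G : Set (A × A) := {p : A × A | ∃ m : ℕ, ∃ a : A, a ∈ 𝒜 m ∧ p = (a, ((-1 : ℤ) ^ m) • a)}
    with hGdef
  set S : Submodule k (A × A) := Submodule.span k G with hSdef
  have hsq : ∀ (m : ℕ) (x : A), ((-1 : ℤ) ^ m) • (((-1 : ℤ) ^ m) • x) = x := by
    intro m x
    rw [smul_smul, ← pow_add, Even.neg_one_pow ⟨m, rfl⟩, one_smul]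
  -- z-normality without signs
  have Lσz : ∀ b : A, z * b = σ b * z := by
    intro b
    have hb : b ∈ (⊤ : Submodule k A) := Submodule.mem_top
    rw [← hsupA] at hb
    refine Submodule.iSup_induction (motive := fun b => z * b = σ b * z) 𝒜 hb ?_ ?_ ?_
    · intro m a ha
      rw [hnormal m a ha, Even.neg_one_pow (hdz.mul_left m), one_smul]
    · simp
    · intro u v hu hv
      simp [mul_add, map_add, add_mul, hu, hv]
  -- Leibniz against z
  have Lz : ∀ a : A, d (a * z) = d a * z := by
    intro a
    have hb : a ∈ (⊤ : Submodule k A) := Submodule.mem_top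
    rw [← hsupA] at hb
    refine Submodule.iSup_induction (motive := fun a => d (a * z) = d a * z) 𝒜 hb ?_ ?_ ?_
    · intro m a ha
      rw [hleib m a z ha, hzcycle, mul_zero, smul_zero, add_zero]
    · simp
    · intro u v hu hv
      simp [add_mul, map_add, hu, hv]
  -- totality of the correspondence
  have total : ∀ a : A, ∃ c : A, (a, c) ∈ S := by
    intro a
    have hb : a ∈ (⊤ : Submodule k A) := Submodule.mem_top
    rw [← hsupA] at hb
    refine Submodule.iSup_induction (motive := fun a => ∃ c : A, (a, c) ∈ S) 𝒜 hb ?_ ?_ ?_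
    · intro m a ha
      exact ⟨((-1 : ℤ) ^ m) • a, Submodule.subset_span ⟨m, a, ha, rfl⟩⟩
    · exact ⟨0, S.zero_mem⟩
    · rintro u v ⟨cu, hcu⟩ ⟨cv, hcv⟩
      exact ⟨cu + cv, by simpa [Prod.mk_add_mk] using S.add_mem hcu hcv⟩
  -- L1 : differential of ι a * y
  have L1 : ∀ p : A × A, p ∈ S → D (ι p.1 * y) = ι (d p.1) * y + ι (p.2 * z) := by
    intro p hp
    refine Submodule.span_induction ?_ ?_ ?_ ?_ hp
    · rintro q ⟨m, a, ha, rfl⟩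
      have h := hD m 0 a ha
      simp only [map_zero, zero_add] at h
      rw [h]
      have : ι ((((-1 : ℤ) ^ m) • a) * z) = ((-1 : ℤ) ^ m) • (ι a * ι z) := by
        rw [smul_mul_assoc, map_zsmul, map_mul]
      rw [this]
    · simp
    · intro q r hq hr ihq ihr
      simp only [Prod.fst_add, Prod.snd_add, map_add, add_mul]
      rw [ihq, ihr]
      abel
    · intro t q hq ihq
      simp only [Prod.smul_fst, Prod.smul_snd, map_smul, smul_mul_assoc]
      rw [ihq, smul_add]
  -- L2 : correspondence is compatible with d (up to sign)
  have L2 : ∀ p : A × A, p ∈ S → (d p.1, -(d p.2)) ∈ S := by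
    intro p hp
    refine Submodule.span_induction ?_ ?_ ?_ ?_ hp
    · rintro q ⟨m, a, ha, rfl⟩
      simp only
      match m with
      | 0 =>
        simp [hd0 a ha]
        exact S.zero_mem
      | Nat.succ n =>
        have h1 : -(d (((-1 : ℤ) ^ (n + 1)) • a)) = ((-1 : ℤ) ^ n) • d a := by
          rw [map_zsmul, pow_succ, mul_neg_one, neg_smul, neg_neg]
        rw [h1]
        exact Submodule.subset_span ⟨n, d a, hdgr n a ha, rfl⟩
    · simp
      exact S.zero_mem
    · intro q r hq hr ihq ihr
      have heq : ((d (q + r).1, -(d (q + r).2)) : A × A)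
          = (d q.1, -(d q.2)) + (d r.1, -(d r.2)) := by
        simp only [Prod.fst_add, Prod.snd_add, map_add, neg_add, Prod.mk_add_mk]
      rw [heq]
      exact S.add_mem ihq ihr
    · intro t q hq ihq
      have := S.smul_mem t ihq
      simpa [Prod.smul_mk, map_smul, smul_neg] using this
  -- L3 : correspondence is symmetric
  have L3 : ∀ p : A × A, p ∈ S → (p.2, p.1) ∈ S := by
    intro p hp
    refine Submodule.span_induction ?_ ?_ ?_ ?_ hp
    · rintro q ⟨m, a, ha, rfl⟩
      simp only
      have hgen : (a, ((-1 : ℤ) ^ m) • a) ∈ S := Submodule.subset_span ⟨m, a, ha, rfl⟩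
      have hmem := S.toAddSubgroup.zsmul_mem hgen ((-1 : ℤ) ^ m)
      have heq : ((-1 : ℤ) ^ m) • ((a, ((-1 : ℤ) ^ m) • a) : A × A)
          = (((-1 : ℤ) ^ m) • a, a) := by
        rw [Prod.smul_mk, hsq]
      rwa [heq] at hmem
    · simp
      exact S.zero_mem
    · intro q r hq hr ihq ihr
      simpa [Prod.mk_add_mk] using S.add_mem ihq ihr
    · intro t q hq ihq
      simpa [Prod.smul_mk] using S.smul_mem t ihq
  -- L4 : commutation with y
  have L4 : ∀ p : A × A, p ∈ S → y * ι p.1 = ι (σ p.2) * y := by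
    intro p hp
    refine Submodule.span_induction ?_ ?_ ?_ ?_ hp
    · rintro q ⟨m, a, ha, rfl⟩
      simp only
      rw [hycomm m a ha, map_zsmul, map_zsmul, smul_mul_assoc]
    · simp
    · intro q r hq hr ihq ihr
      simp only [Prod.fst_add, Prod.snd_add, map_add, add_mul, mul_add] at *
      rw [ihq, ihr]
    · intro t q hq ihq
      simp only [Prod.smul_fst, Prod.smul_snd, map_smul, smul_mul_assoc, mul_smul_comm] at *
      rw [ihq]
  -- uniqueness of decompositions
  have huniq : ∀ a b a' b' : A, ι a + ι b * y = ι a' + ι b' * y → a = a' ∧ b = b' := by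
    intro a b a' b' h
    obtain ⟨p, hp, hu⟩ := hfree (ι a + ι b * y)
    have h1 := hu (a, b) rfl
    have h2 := hu (a', b') h
    have : (a, b) = (a', b') := h1.trans h2.symm
    exact ⟨congrArg Prod.fst this, congrArg Prod.snd this⟩
  -- L5 : the correspondence is single-valued at 0
  have L5 : ∀ s : A, ((0 : A), s) ∈ S → s = 0 := by
    intro s hs
    have h4 := L4 _ hs
    simp only [map_zero, mul_zero] at h4
    have h0 : (0 : E) = ι (0 : A) + ι ((0 : A)) * y := by simp
    have h1 : (0 : E) = ι (0 : A) + ι (σ s) * y := by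
      rw [← h4]; simp
    obtain ⟨h2, h3⟩ := huniq _ _ _ _ (h0.symm.trans h1)
    have : σ s = σ 0 := by rw [map_zero, ← h3]
    exact σ.injective this
  -- D on the image of ι
  have Dι : ∀ a : A, D (ι a) = ι (d a) := by
    intro a
    have h := hD 0 a 0 (Submodule.zero_mem _)
    simpa using h
  -- the general formula for D
  have Dform : ∀ a₁ a₂ c : A, (a₂, c) ∈ S →
      D (ι a₁ + ι a₂ * y) = ι (d a₁ + c * z) + ι (d a₂) * y := by
    intro a₁ a₂ c hc
    rw [map_add, Dι, L1 (a₂, c) hc, map_add]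
    abel
  constructor
  · -- (a) surjectivity
    intro e hDe
    obtain ⟨⟨a₁, a₂⟩, he, -⟩ := hfree e
    obtain ⟨c, hc⟩ := total a₂
    have hDe' : (0 : E) = ι (d a₁ + c * z) + ι (d a₂) * y := by
      rw [← hDe, he, Dform a₁ a₂ c hc]
    have h0 : (0 : E) = ι (0 : A) + ι ((0 : A)) * y := by simp
    obtain ⟨h1, h2⟩ := huniq _ _ _ _ (h0.symm.trans hDe')
    -- h1 : 0 = d a₁ + c * z, h2 : 0 = d a₂
    have hdc : d c = 0 := by
      have h2' := L2 _ hc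
      simp only [← h2] at h2'
      have := L5 _ h2'
      exact neg_eq_zero.mp this
    have hczb : ∃ b : A, c * z = d b := by
      refine ⟨-a₁, ?_⟩
      rw [map_neg]
      exact eq_neg_of_add_eq_zero_right h1.symm
    obtain ⟨b, hb⟩ := hreg c hdc hczb
    obtain ⟨b', hb'⟩ := total b
    have hc2 : (c, -(d b')) ∈ S := by
      have := L2 _ hb'
      rwa [← hb] at this
    have hc3 : (c, a₂) ∈ S := L3 _ hc
    have hz2 : ((0 : A), a₂ + d b') ∈ S := by
      have := S.sub_mem hc3 hc2
      simpa [Prod.mk_sub_mk, sub_neg_eq_add] using this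
    have ha₂ : a₂ = -(d b') := eq_neg_of_add_eq_zero_left (L5 _ hz2)
    refine ⟨a₁ + b * z, ?_, ι (-b') * y, ?_⟩
    · rw [map_add, Lz b, ← hb]
      exact h1.symm
    · have hS : ((-b' : A), -b) ∈ S := by
        have h3 := L3 _ hb'
        have := S.neg_mem h3
        simpa using this
      have hL := L1 _ hS
      simp only at hL
      rw [hL, he]
      have hd1 : ι (d (-b' : A)) = ι a₂ := by rw [map_neg, ← ha₂]
      rw [hd1]
      simp only [map_add, map_neg, neg_mul, map_mul]
      abel
  · -- (b) kernel
    intro a ha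
    constructor
    · rintro ⟨e', he'⟩
      obtain ⟨⟨u, v⟩, hev, -⟩ := hfree e'
      obtain ⟨c, hc⟩ := total v
      have h : ι a = ι (d u + c * z) + ι (d v) * y := by
        rw [he', hev, Dform u v c hc]
      have h0 : ι a = ι a + ι ((0 : A)) * y := by simp
      obtain ⟨h1, h2⟩ := huniq _ _ _ _ (h0.symm.trans h)
      -- h1 : a = d u + c * z, h2 : 0 = d v
      have hdc : d c = 0 := by
        have h2' := L2 _ hc
        simp only [← h2] at h2'
        exact neg_eq_zero.mp (L5 _ h2')
      refine ⟨σ.symm c, ?_, u, ?_⟩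
      · apply σ.injective
        rw [hσchain, σ.apply_symm_apply, hdc, map_zero]
      · rw [Lσz (σ.symm c), σ.apply_symm_apply, h1]
        abel
    · rintro ⟨b, hdb, a', ha'⟩
      obtain ⟨t, ht⟩ := total (σ b)
      have ht2 : ((t : A), σ b) ∈ S := L3 _ ht
      have hdt : d t = 0 := by
        have h := L2 _ ht
        simp only [← hσchain, hdb, map_zero] at h
        exact neg_eq_zero.mp (L5 _ h)
      have hD1 : D (ι t * y) = ι (σ b * z) := by
        have := L1 _ ht2
        simp only at this
        rw [this, hdt]
        simp
      refine ⟨ι t * y + ι a', ?_⟩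
      rw [map_add, hD1, Dι, ← Lσz b, ← ha']
      rw [map_sub]
      abel
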